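/- Let A = {a1 < a2 < ...} and B = {b1 < b2 < ...} be two infinite sequences of positive integers with b1 > 1 such that P(A) = ℕ \ B, and let k be the index with a_k < b1 < a_{k+1}. If b2 ≥ 3·b1 + 5, then b2 ≥ 2·a_{k+2} + b1 + 1. -/

import Mathlib

/-- The set of all finite subset sums of a set of positive integers
(finite sums of distinct elements; the empty sum 0 is included). -/
def subsetSums (S : Set ℕ) : Set ℕ :=
  {n | ∃ F : Finset ℕ, ↑F ⊆ S ∧ ∑ x ∈ F, x = n}

/-- If `b₂ ≥ 3b₁+5` then `b₂ ≥ 2a_{k+2} + b₁ + 1`.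
Here `a i`, `b i` are the `(i+1)`-st elements of `A`, `B`. -/
theorem stmt7 (a b : ℕ → ℕ) (ha : StrictMono a) (hapos : ∀ i, 0 < a i)
    (hb : StrictMono b) (hb1 : 1 < b 0)
    (hPA : subsetSums (Set.range a) = Set.univ \ Set.range b)
    (k : ℕ) (hk1 : a k < b 0) (hk2 : b 0 < a (k + 1))
    (hb2 : 3 * b 0 + 5 ≤ b 1) :
    2 * a (k + 2) + b 0 + 1 ≤ b 1 := by
  have hb01 : b 0 < b 1 := hb (by norm_num)
  have hmem : ∀ n : ℕ, (∃ F : Finset ℕ, ↑F ⊆ Set.range a ∧ ∑ x ∈ F, x = n) ↔ n ∉ Set.range b := by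
    intro n
    constructor
    · intro h hn
      have h2 : n ∈ subsetSums (Set.range a) := h
      rw [hPA] at h2
      exact h2.2 hn
    · intro h
      have h2 : n ∈ Set.univ \ Set.range b := ⟨trivial, h⟩
      rw [← hPA] at h2
      exact h2
  have hb0 : ¬ ∃ F : Finset ℕ, ↑F ⊆ Set.range a ∧ ∑ x ∈ F, x = b 0 :=
    fun h => (hmem _).1 h ⟨0, rfl⟩
  have hbB1 : ¬ ∃ F : Finset ℕ, ↑F ⊆ Set.range a ∧ ∑ x ∈ F, x = b 1 :=
    fun h => (hmem _).1 h ⟨1, rfl⟩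
  have hrep : ∀ n : ℕ, n < b 1 → n ≠ b 0 →
      ∃ F : Finset ℕ, ↑F ⊆ Set.range a ∧ ∑ x ∈ F, x = n := by
    intro n hn hne
    apply (hmem n).2
    rintro ⟨j, hj⟩
    rcases Nat.eq_zero_or_pos j with h | h
    · exact hne (by rw [← hj, h])
    · have h2 : b 1 ≤ b j := hb.monotone h
      omega
  have hb0a : b 0 ∉ Set.range a := by
    intro h
    exact hb0 ⟨{b 0}, by simpa using h, by simp⟩
  have hsingle : ∀ (F : Finset ℕ) (x : ℕ), x ∈ F → x ≤ ∑ y ∈ F, y := by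
    intro F x hx
    exact Finset.single_le_sum (f := fun y => y) (fun i _ => Nat.zero_le i) hx
  -- the sum of the image of an initial segment
  have himgsum : ∀ j : ℕ, ∑ x ∈ Finset.image a (Finset.range j), x = ∑ i ∈ Finset.range j, a i := by
    intro j
    exact Finset.sum_image (fun i _ j _ h => ha.injective h)
  have himgcoe : ∀ j : ℕ, ↑(Finset.image a (Finset.range j)) ⊆ Set.range a := by
    intro j x hx
    obtain ⟨i, _, rfl⟩ := Finset.mem_image.1 hx
    exact ⟨i, rfl⟩
  -- Key induction: partial sums of the a_i below b 0 stay below b 0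
  have key : ∀ j : ℕ, j ≤ k + 1 → (∑ i ∈ Finset.range j, a i) < b 0 ∧
      ∀ m ≤ ∑ i ∈ Finset.range j, a i,
        ∃ F : Finset ℕ, F ⊆ Finset.image a (Finset.range j) ∧ ∑ x ∈ F, x = m := by
    intro j
    induction j with
    | zero =>
      intro _
      constructor
      · simp only [Finset.range_zero, Finset.sum_empty]
        omega
      · intro m hm
        simp only [Finset.range_zero, Finset.sum_empty, Nat.le_zero] at hm
        exact ⟨∅, Finset.empty_subset _, by simp [hm]⟩
    | succ j ih =>
      intro hj
      obtain ⟨hs, hcov⟩ := ih (by omega)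
      have haj : a j < b 0 := lt_of_le_of_lt (ha.monotone (by omega : j ≤ k)) hk1
      have hstep : a j ≤ (∑ i ∈ Finset.range j, a i) + 1 := by
        by_contra hgt
        push_neg at hgt
        have h1 : (∑ i ∈ Finset.range j, a i) + 1 < b 0 := by omega
        obtain ⟨F, hF, hsum⟩ := hrep ((∑ i ∈ Finset.range j, a i) + 1) (by omega) (by omega)
        have hsub : F ⊆ Finset.image a (Finset.range j) := by
          intro x hx
          have hxa : x ∈ Set.range a := hF hx
          have hxle : x ≤ (∑ i ∈ Finset.range j, a i) + 1 := by
            have := hsingle F x hx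
            omega
          obtain ⟨i, rfl⟩ := hxa
          have hij : i < j := by
            by_contra hij
            push_neg at hij
            have := ha.monotone hij
            omega
          exact Finset.mem_image.2 ⟨i, Finset.mem_range.2 hij, rfl⟩
        have hle : ∑ x ∈ F, x ≤ ∑ i ∈ Finset.range j, a i := by
          calc ∑ x ∈ F, x ≤ ∑ x ∈ Finset.image a (Finset.range j), x :=
                Finset.sum_le_sum_of_subset hsub
            _ = ∑ i ∈ Finset.range j, a i := himgsum j
        omega
      have hcov' : ∀ m ≤ ∑ i ∈ Finset.range (j+1), a i,
          ∃ F : Finset ℕ, F ⊆ Finset.image a (Finset.range (j+1)) ∧ ∑ x ∈ F, x = m := by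
        intro m hm
        rw [Finset.sum_range_succ] at hm
        by_cases hm' : m ≤ ∑ i ∈ Finset.range j, a i
        · obtain ⟨F, hF, hsF⟩ := hcov m hm'
          exact ⟨F, hF.trans (Finset.image_subset_image (by
            intro i hi
            simp only [Finset.mem_range] at hi ⊢
            omega)), hsF⟩
        · push_neg at hm'
          obtain ⟨F, hF, hsF⟩ := hcov (m - a j) (by omega)
          have hajF : a j ∉ F := by
            intro hmemF
            have := hF hmemF
            obtain ⟨i, hi, heq⟩ := Finset.mem_image.1 this
            have : i = j := ha.injective heq
            simp only [Finset.mem_range] at hi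
            omega
          refine ⟨insert (a j) F, ?_, ?_⟩
          · intro x hx
            rcases Finset.mem_insert.1 hx with h | h
            · exact Finset.mem_image.2 ⟨j, Finset.mem_range.2 (by omega), h.symm⟩
            · exact (Finset.image_subset_image (by
                intro i hi
                simp only [Finset.mem_range] at hi ⊢
                omega)) (hF h)
          · rw [Finset.sum_insert hajF, hsF]
            omega
      have hbnd : (∑ i ∈ Finset.range (j+1), a i) < b 0 := by
        by_contra hge
        push_neg at hge
        obtain ⟨F, hF, hsF⟩ := hcov' (b 0) hge
        exact hb0 ⟨F, (Finset.coe_subset.2 hF).trans (himgcoe (j+1)), hsF⟩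
      exact ⟨hbnd, hcov'⟩
  -- L1 : a subset of A with all elements < b 0 sums to < b 0
  have L1 : ∀ F : Finset ℕ, ↑F ⊆ Set.range a → (∀ x ∈ F, x < b 0) → ∑ x ∈ F, x < b 0 := by
    intro F hF hFlt
    have hsub : F ⊆ Finset.image a (Finset.range (k+1)) := by
      intro x hx
      obtain ⟨i, rfl⟩ := hF hx
      have hik : i < k + 1 := by
        by_contra h
        push_neg at h
        have := ha.monotone h
        have := hFlt _ hx
        omega
      exact Finset.mem_image.2 ⟨i, Finset.mem_range.2 hik, rfl⟩
    calc ∑ x ∈ F, x ≤ ∑ x ∈ Finset.image a (Finset.range (k+1)), x :=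
          Finset.sum_le_sum_of_subset hsub
      _ = ∑ i ∈ Finset.range (k+1), a i := himgsum (k+1)
      _ < b 0 := (key (k+1) le_rfl).1
  -- a (k+1) = b 0 + 1
  have ha1 : a (k+1) = b 0 + 1 := by
    obtain ⟨F, hF, hsum⟩ := hrep (b 0 + 1) (by omega) (by omega)
    have hex : ∃ x ∈ F, b 0 ≤ x := by
      by_contra h
      push_neg at h
      have := L1 F hF h
      omega
    obtain ⟨x, hxF, hxge⟩ := hex
    have hxle : x ≤ b 0 + 1 := by
      have := hsingle F x hxF
      omega
    have hxa : x ∈ Set.range a := hF hxF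
    have hxne : x ≠ b 0 := fun h => hb0a (h ▸ hxa)
    have hx : x = b 0 + 1 := by omega
    obtain ⟨i, hi⟩ := hxa
    have hik : k + 1 ≤ i := by
      by_contra h
      push_neg at h
      have := ha.monotone (by omega : i ≤ k)
      omega
    have h1 : a (k+1) ≤ a i := ha.monotone hik
    omega
  have hc1 : b 0 + 2 ≤ a (k+2) := by
    have := ha (show k+1 < k+2 by omega)
    omega
  -- gap structure: elements of A are < b 0, = b 0 + 1, or ≥ a (k+2)
  have hgap : ∀ x ∈ Set.range a, x < b 0 ∨ x = b 0 + 1 ∨ a (k+2) ≤ x := by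
    rintro x ⟨i, rfl⟩
    rcases le_or_gt i k with h | h
    · exact Or.inl (lt_of_le_of_lt (ha.monotone h) hk1)
    · rcases eq_or_lt_of_le (Nat.succ_le_of_lt h) with h' | h'
      · right; left; rw [← ha1]; congr 1; omega
      · exact Or.inr (Or.inr (ha.monotone (by omega)))
  -- c = a(k+2) ≤ 2 b0 + 1
  have hc2 : a (k+2) ≤ 2 * b 0 + 1 := by
    obtain ⟨F, hF, hsum⟩ := hrep (2 * b 0 + 1) (by omega) (by omega)
    have hex : ∃ x ∈ F, b 0 + 2 ≤ x := by
      by_contra h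
      push_neg at h
      have hsub : ∀ x ∈ F.erase (b 0 + 1), x < b 0 := by
        intro x hx
        have h1 := Finset.mem_of_mem_erase hx
        have h2 := Finset.ne_of_mem_erase hx
        have h3 := h x h1
        have h4 : x ≠ b 0 := fun he => hb0a (he ▸ hF h1)
        omega
      have hsum' := L1 (F.erase (b 0 + 1))
        ((Finset.coe_subset.2 (Finset.erase_subset _ _)).trans hF) hsub
      have hle : ∑ x ∈ F, x ≤ (∑ x ∈ F.erase (b 0 + 1), x) + (b 0 + 1) := by
        by_cases hb01F : b 0 + 1 ∈ F
        · have h5 : (∑ x ∈ F.erase (b 0 + 1), x) + (b 0 + 1) = ∑ x ∈ F, x :=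
            Finset.sum_erase_add F (fun x => x) hb01F
          omega
        · rw [Finset.erase_eq_of_notMem hb01F]
          omega
      omega
    obtain ⟨x, hxF, hxge⟩ := hex
    have hxle : x ≤ 2 * b 0 + 1 := by
      have := hsingle F x hxF
      omega
    obtain ⟨i, hi⟩ := hF hxF
    have hik : k + 2 ≤ i := by
      by_contra h
      push_neg at h
      have := ha.monotone (by omega : i ≤ k + 1)
      omega
    have := ha.monotone hik
    omega
  -- d = a(k+3) ≤ a(k+2) + b 0
  have hdc : a (k+2) < a (k+3) := ha (by omega)
  have hd : a (k+3) ≤ a (k+2) + b 0 := by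
    obtain ⟨F, hF, hsum⟩ := hrep (a (k+2) + b 0) (by omega) (by omega)
    have hex : ∃ x ∈ F, a (k+2) < x := by
      by_contra h
      push_neg at h
      by_cases hcF : a (k+2) ∈ F
      · by_cases hbF : b 0 + 1 ∈ F
        · have h1 : b 0 + 1 ∈ F.erase (a (k+2)) :=
            Finset.mem_erase.2 ⟨by omega, hbF⟩
          have h2 := hsingle (F.erase (a (k+2))) _ h1
          have h3 : (∑ x ∈ F.erase (a (k+2)), x) + a (k+2) = ∑ x ∈ F, x :=
            Finset.sum_erase_add F (fun x => x) hcF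
          omega
        · have hsub : ∀ x ∈ F.erase (a (k+2)), x < b 0 := by
            intro x hx
            have h1 := Finset.mem_of_mem_erase hx
            have h2 := Finset.ne_of_mem_erase hx
            rcases hgap x (hF h1) with h3 | h3 | h3
            · exact h3
            · exact absurd (h3 ▸ h1) hbF
            · have := h x h1; omega
          have hsum' := L1 (F.erase (a (k+2)))
            ((Finset.coe_subset.2 (Finset.erase_subset _ _)).trans hF) hsub
          have h3 : (∑ x ∈ F.erase (a (k+2)), x) + a (k+2) = ∑ x ∈ F, x :=
            Finset.sum_erase_add F (fun x => x) hcF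
          omega
      · have hsub : ∀ x ∈ F.erase (b 0 + 1), x < b 0 := by
          intro x hx
          have h1 := Finset.mem_of_mem_erase hx
          have h2 := Finset.ne_of_mem_erase hx
          rcases hgap x (hF h1) with h3 | h3 | h3
          · exact h3
          · exact absurd h3 h2
          · have h4 := h x h1
            have : x = a (k+2) := by omega
            exact absurd (this ▸ h1) hcF
        have hsum' := L1 (F.erase (b 0 + 1))
          ((Finset.coe_subset.2 (Finset.erase_subset _ _)).trans hF) hsub
        have hle : ∑ x ∈ F, x ≤ (∑ x ∈ F.erase (b 0 + 1), x) + (b 0 + 1) := by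
          by_cases hb01F : b 0 + 1 ∈ F
          · have h5 : (∑ x ∈ F.erase (b 0 + 1), x) + (b 0 + 1) = ∑ x ∈ F, x :=
              Finset.sum_erase_add F (fun x => x) hb01F
            omega
          · rw [Finset.erase_eq_of_notMem hb01F]
            omega
        omega
    obtain ⟨x, hxF, hxge⟩ := hex
    have hxle : x ≤ a (k+2) + b 0 := by
      have := hsingle F x hxF
      omega
    obtain ⟨i, hi⟩ := hF hxF
    have hik : k + 3 ≤ i := by
      by_contra h
      push_neg at h
      have := ha.monotone (by omega : i ≤ k + 2)
      omega
    have := ha.monotone hik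
    omega
  -- Step A : b 1 ≥ a(k+2) + 2 b0 + 2
  have hA : a (k+2) + 2 * b 0 + 2 ≤ b 1 := by
    obtain ⟨F, hF, hsum⟩ := hrep (b 1 - b 0 - 1) (by omega) (by omega)
    have hbF : b 0 + 1 ∈ F := by
      by_contra h
      apply hbB1
      refine ⟨insert (b 0 + 1) F, ?_, ?_⟩
      · rw [Finset.coe_insert]
        exact Set.insert_subset_iff.2 ⟨⟨k+1, ha1⟩, hF⟩
      · rw [Finset.sum_insert h]
        omega
    have hsumG : (∑ x ∈ F.erase (b 0 + 1), x) = b 1 - 2 * b 0 - 2 := by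
      have h5 : (∑ x ∈ F.erase (b 0 + 1), x) + (b 0 + 1) = ∑ x ∈ F, x :=
        Finset.sum_erase_add F (fun x => x) hbF
      omega
    have hex : ∃ x ∈ F.erase (b 0 + 1), b 0 ≤ x := by
      by_contra h
      push_neg at h
      have := L1 (F.erase (b 0 + 1))
        ((Finset.coe_subset.2 (Finset.erase_subset _ _)).trans hF) h
      omega
    obtain ⟨x, hxG, hxge⟩ := hex
    rcases hgap x (hF (Finset.mem_of_mem_erase hxG)) with h | h | h
    · omega
    · exact absurd h (Finset.ne_of_mem_erase hxG)
    · have hxle : x ≤ b 1 - 2 * b 0 - 2 := by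
        have := hsingle _ x hxG
        omega
      omega
  -- Step B : b 1 ≥ a(k+3) + 2 b0 + 1
  have hB : a (k+3) + 2 * b 0 + 1 ≤ b 1 := by
    by_contra h
    push_neg at h
    obtain ⟨F, hF, hsum⟩ := hrep (b 1 - a (k+3) - b 0 - 1) (by omega) (by omega)
    have helts : ∀ x ∈ F, x ≤ b 1 - a (k+3) - b 0 - 1 := by
      intro x hx
      have := hsingle F x hx
      omega
    apply hbB1
    have hbnotF : b 0 + 1 ∉ F := by
      intro hx
      have := helts _ hx
      omega
    have hdnot : a (k+3) ∉ insert (b 0 + 1) F := by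
      intro hx
      rcases Finset.mem_insert.1 hx with h' | h'
      · omega
      · have := helts _ h'
        omega
    refine ⟨insert (a (k+3)) (insert (b 0 + 1) F), ?_, ?_⟩
    · rw [Finset.coe_insert, Finset.coe_insert]
      exact Set.insert_subset_iff.2 ⟨⟨k+3, rfl⟩,
        Set.insert_subset_iff.2 ⟨⟨k+1, ha1⟩, hF⟩⟩
    · rw [Finset.sum_insert hdnot, Finset.sum_insert hbnotF, hsum]
      omega
  -- Final dichotomy with {a(k+2), a(k+3)}
  rcases lt_or_ge (b 1) (a (k+2) + a (k+3)) with hcase | hcase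
  · omega
  · rcases le_or_gt (a (k+2) + a (k+3) + b 0) (b 1) with hcase2 | hcase2
    · omega
    · exfalso
      obtain ⟨F, hF, hsum⟩ := hrep (b 1 - a (k+2) - a (k+3)) (by omega) (by omega)
      have helts : ∀ x ∈ F, x ≤ b 1 - a (k+2) - a (k+3) := by
        intro x hx
        have := hsingle F x hx
        omega
      have hcnotF : a (k+2) ∉ F := by
        intro hx
        have := helts _ hx
        omega
      have hdnot : a (k+3) ∉ insert (a (k+2)) F := by
        intro hx
        rcases Finset.mem_insert.1 hx with h' | h'
        · omega
        · have := helts _ h'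
          omega
      apply hbB1
      refine ⟨insert (a (k+3)) (insert (a (k+2)) F), ?_, ?_⟩
      · rw [Finset.coe_insert, Finset.coe_insert]
        exact Set.insert_subset_iff.2 ⟨⟨k+3, rfl⟩,
          Set.insert_subset_iff.2 ⟨⟨k+2, rfl⟩, hF⟩⟩
      · rw [Finset.sum_insert hdnot, Finset.sum_insert hcnotF, hsum]
        omega
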